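/- arXiv:dg-ga/9410002 — 3 statements merged into one kernel-verified Lean document; each statement's English description precedes it below -/
import Mathlib

section
/- Let σ be a ℤ-bilinear symmetric form on ℤ × ℤ with values in ℝ that is positive definite (σ(v,v) > 0 for every v ≠ 0). Suppose (b₀, f₀) and (b₁, f₁) are two generating pairs of the abelian group ℤ × ℤ (i.e. each pair generates ℤ × ℤ as a group), and both pairs are σ-orthogonal: σ(b₀, f₀) = 0 and σ(b₁, f₁) = 0. Then {b₁, −b₁, f₁, −f₁} = {b₀, −b₀, f₀, −f₀} as subsets of ℤ × ℤ. -/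
private lemma span_pair_left_ne_zero (x y : ℤ × ℤ)
    (h : Submodule.span ℤ ({x, y} : Set (ℤ×ℤ)) = ⊤) : x ≠ 0 := by
  rintro rfl
  have h1 : ((1,0) : ℤ×ℤ) ∈ Submodule.span ℤ ({0, y} : Set (ℤ×ℤ)) := h ▸ Submodule.mem_top
  have h2 : ((0,1) : ℤ×ℤ) ∈ Submodule.span ℤ ({0, y} : Set (ℤ×ℤ)) := h ▸ Submodule.mem_top
  obtain ⟨m, n, hmn⟩ := Submodule.mem_span_pair.mp h1
  obtain ⟨p, q, hpq⟩ := Submodule.mem_span_pair.mp h2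
  have e1 := congrArg Prod.fst hmn
  have e2 := congrArg Prod.snd hmn
  have e4 := congrArg Prod.snd hpq
  simp [Prod.fst_add, Prod.snd_add, smul_eq_mul] at e1 e2 e4
  have hn : n ≠ 0 := by rintro rfl; simp at e1
  have hy2 : y.2 = 0 := e2.resolve_left hn
  rw [hy2] at e4; simp at e4

private lemma span_pair_right_ne_zero (x y : ℤ × ℤ)
    (h : Submodule.span ℤ ({x, y} : Set (ℤ×ℤ)) = ⊤) : y ≠ 0 := by
  apply span_pair_left_ne_zero y x; rwa [Set.pair_comm]

private lemma unit_of_mul_eq_pm_one {n p : ℤ} (h : n * p = 1 ∨ n * p = -1) :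
    (n = 1 ∨ n = -1) ∧ (p = 1 ∨ p = -1) := by
  rcases h with h | h
  · exact ⟨Int.isUnit_iff.mp (IsUnit.of_mul_eq_one (a := n) p h),
      Int.isUnit_iff.mp (IsUnit.of_mul_eq_one (a := p) n (by linarith [mul_comm n p]))⟩
  · have h1 : n * (-p) = 1 := by linarith
    exact ⟨Int.isUnit_iff.mp (IsUnit.of_mul_eq_one (a := n) (-p) h1),
      by rcases Int.isUnit_iff.mp (IsUnit.of_mul_eq_one (a := -p) n
        (by linarith [mul_comm n p])) with h' | h' <;> omega⟩

private lemma det_cases (m n p q : ℤ) (A B : ℝ) (hA : 0 < A) (hB : 0 < B)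
    (hdet : m*q - n*p = 1 ∨ m*q - n*p = -1)
    (ho : ((m*p : ℤ) : ℝ) * A + ((n*q : ℤ) : ℝ) * B = 0) :
    (n = 0 ∧ p = 0 ∧ (m = 1 ∨ m = -1) ∧ (q = 1 ∨ q = -1)) ∨
    (m = 0 ∧ q = 0 ∧ (n = 1 ∨ n = -1) ∧ (p = 1 ∨ p = -1)) := by
  have hz : (m*p = 0 ∧ n*q = 0) ∨ (m*p) * (n*q) < 0 := by
    rcases lt_trichotomy (m*p) 0 with h | h | h
    · right
      have hmp : ((m*p : ℤ) : ℝ) < 0 := by exact_mod_cast h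
      have hb : (0:ℝ) < ((n*q : ℤ) : ℝ) * B := by nlinarith
      have : (0:ℤ) < n*q := by
        by_contra hc; push_neg at hc
        have : ((n*q : ℤ) : ℝ) ≤ 0 := by exact_mod_cast hc
        nlinarith
      nlinarith
    · left
      refine ⟨h, ?_⟩
      rw [h] at ho; push_cast at ho
      have : ((n*q : ℤ) : ℝ) = 0 := by
        have hB' : B ≠ 0 := ne_of_gt hB
        have : ((n:ℝ) * q) * B = 0 := by linarith
        rcases mul_eq_zero.mp this with h' | h'
        · push_cast; exact h'
        · exact absurd h' hB'
      exact_mod_cast this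
    · right
      have hmp : (0:ℝ) < ((m*p : ℤ) : ℝ) := by exact_mod_cast h
      have hb : ((n*q : ℤ) : ℝ) * B < 0 := by nlinarith
      have : n*q < 0 := by
        by_contra hc; push_neg at hc
        have : (0:ℝ) ≤ ((n*q : ℤ) : ℝ) := by exact_mod_cast hc
        nlinarith
      nlinarith
  rcases hz with ⟨h1, h2⟩ | hneg
  · rcases mul_eq_zero.mp h1 with hm | hp
    · -- m = 0
      right
      have hnp : n*p = 1 ∨ n*p = -1 := by
        rcases hdet with h | h <;> rw [hm] at h
        · right; linarith
        · left; linarith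
      obtain ⟨hn, hp'⟩ := unit_of_mul_eq_pm_one hnp
      have hn0 : n ≠ 0 := by rcases hn with h | h <;> omega
      have hq : q = 0 := (mul_eq_zero.mp h2).resolve_left hn0
      exact ⟨hm, hq, hn, hp'⟩
    · -- p = 0
      left
      have hmq : m*q = 1 ∨ m*q = -1 := by
        rcases hdet with h | h <;> rw [hp] at h
        · left; linarith
        · right; linarith
      obtain ⟨hm', hq'⟩ := unit_of_mul_eq_pm_one hmq
      have hq0 : q ≠ 0 := by rcases hq' with h | h <;> omega
      have hn : n = 0 := (mul_eq_zero.mp h2).resolve_right hq0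
      exact ⟨hn, hp, hm', hq'⟩
  · exfalso
    have h3 : (m*q) * (n*p) < 0 := by nlinarith
    rcases mul_neg_iff.mp h3 with ⟨h4, h5⟩ | ⟨h4, h5⟩ <;>
      rcases hdet with h' | h' <;> nlinarith

private lemma set_pm (a b c d : ℤ × ℤ) (h1 : c = a ∨ c = -a) (h2 : d = b ∨ d = -b) :
    ({c, -c, d, -d} : Set (ℤ×ℤ)) = {a, -a, b, -b} := by
  rcases h1 with rfl | rfl <;> rcases h2 with rfl | rfl <;> ext x <;>
    simp only [Set.mem_insert_iff, Set.mem_singleton_iff, neg_neg] <;> tauto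

private lemma set_pm_comm (a b : ℤ × ℤ) :
    ({a, -a, b, -b} : Set (ℤ×ℤ)) = {b, -b, a, -a} := by
  ext x; simp only [Set.mem_insert_iff, Set.mem_singleton_iff]; tauto

/-- A σ-orthogonal generating pair of the lattice ℤ × ℤ, for a positive definite
symmetric ℤ-bilinear form σ with real values, is unique up to sign and order. -/
theorem stmt_0 (σ : (ℤ × ℤ) →ₗ[ℤ] (ℤ × ℤ) →ₗ[ℤ] ℝ)
    (hsymm : ∀ v w, σ v w = σ w v)
    (hpos : ∀ v : ℤ × ℤ, v ≠ 0 → 0 < σ v v)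
    (b₀ f₀ b₁ f₁ : ℤ × ℤ)
    (hgen₀ : Submodule.span ℤ ({b₀, f₀} : Set (ℤ × ℤ)) = ⊤)
    (hgen₁ : Submodule.span ℤ ({b₁, f₁} : Set (ℤ × ℤ)) = ⊤)
    (horth₀ : σ b₀ f₀ = 0) (horth₁ : σ b₁ f₁ = 0) :
    ({b₁, -b₁, f₁, -f₁} : Set (ℤ × ℤ)) = {b₀, -b₀, f₀, -f₀} := by
  have hb₀ : b₀ ≠ 0 := span_pair_left_ne_zero _ _ hgen₀
  have hf₀ : f₀ ≠ 0 := span_pair_right_ne_zero _ _ hgen₀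
  have hApos : 0 < σ b₀ b₀ := hpos b₀ hb₀
  have hBpos : 0 < σ f₀ f₀ := hpos f₀ hf₀
  have horth₀' : σ f₀ b₀ = 0 := (hsymm f₀ b₀).trans horth₀
  -- injectivity of coordinates
  have hinj : ∀ α β : ℤ, α • b₀ + β • f₀ = 0 → α = 0 ∧ β = 0 := by
    intro α β h
    by_contra hc
    have hval : σ (α • b₀ + β • f₀) (α • b₀ + β • f₀)
        = (α:ℝ)^2 * σ b₀ b₀ + (β:ℝ)^2 * σ f₀ f₀ := by
      simp only [map_add, map_smul, LinearMap.add_apply, LinearMap.smul_apply]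
      simp only [horth₀, horth₀', smul_zero, add_zero, zero_add, zsmul_eq_mul]
      ring
    have hαβ : α ≠ 0 ∨ β ≠ 0 := by tauto
    have hposv : (0:ℝ) < (α:ℝ)^2 * σ b₀ b₀ + (β:ℝ)^2 * σ f₀ f₀ := by
      rcases hαβ with h' | h'
      · have hα : (0:ℝ) < (α:ℝ)^2 := by positivity
        nlinarith [sq_nonneg (β:ℝ)]
      · have hβ : (0:ℝ) < (β:ℝ)^2 := by positivity
        nlinarith [sq_nonneg (α:ℝ)]
    rw [h] at hval
    simp only [map_zero, LinearMap.zero_apply] at hval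
    linarith
  have hinj2 : ∀ α β α' β' : ℤ, α • b₀ + β • f₀ = α' • b₀ + β' • f₀ → α = α' ∧ β = β' := by
    intro α β α' β' h
    have h0 : (α - α') • b₀ + (β - β') • f₀ = 0 := by
      linear_combination (norm := module) h
    have := hinj _ _ h0
    omega
  -- coordinates
  obtain ⟨m, n, hb1⟩ := Submodule.mem_span_pair.mp
    (hgen₀ ▸ Submodule.mem_top : b₁ ∈ Submodule.span ℤ ({b₀, f₀} : Set (ℤ×ℤ)))
  obtain ⟨p, q, hf1⟩ := Submodule.mem_span_pair.mp
    (hgen₀ ▸ Submodule.mem_top : f₁ ∈ Submodule.span ℤ ({b₀, f₀} : Set (ℤ×ℤ)))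
  obtain ⟨s, t, hs⟩ := Submodule.mem_span_pair.mp
    (hgen₁ ▸ Submodule.mem_top : b₀ ∈ Submodule.span ℤ ({b₁, f₁} : Set (ℤ×ℤ)))
  obtain ⟨u, v, hu⟩ := Submodule.mem_span_pair.mp
    (hgen₁ ▸ Submodule.mem_top : f₀ ∈ Submodule.span ℤ ({b₁, f₁} : Set (ℤ×ℤ)))
  have e1 : (s*m+t*p) • b₀ + (s*n+t*q) • f₀ = (1:ℤ) • b₀ + (0:ℤ) • f₀ := by
    rw [← hb1, ← hf1] at hs
    linear_combination (norm := module) hs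
  have e2 : (u*m+v*p) • b₀ + (u*n+v*q) • f₀ = (0:ℤ) • b₀ + (1:ℤ) • f₀ := by
    rw [← hb1, ← hf1] at hu
    linear_combination (norm := module) hu
  obtain ⟨c1, c2⟩ := hinj2 _ _ _ _ e1
  obtain ⟨c3, c4⟩ := hinj2 _ _ _ _ e2
  -- determinant is a unit
  have hdet : (m*q - n*p) * (s*v - t*u) = 1 := by nlinarith [c1, c2, c3, c4]
  have hdet1 : m*q - n*p = 1 ∨ m*q - n*p = -1 :=
    Int.isUnit_iff.mp (IsUnit.of_mul_eq_one _ hdet)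
  -- orthogonality in coordinates
  have horthc : ((m*p : ℤ):ℝ) * σ b₀ b₀ + ((n*q : ℤ):ℝ) * σ f₀ f₀ = 0 := by
    have h := horth₁
    rw [← hb1, ← hf1] at h
    simp only [map_add, map_smul, LinearMap.add_apply, LinearMap.smul_apply] at h
    simp only [horth₀, horth₀', smul_zero, add_zero, zero_add, zsmul_eq_mul] at h
    push_cast
    linarith
  rcases det_cases m n p q _ _ hApos hBpos hdet1 horthc with
      ⟨hn, hp, hm, hq⟩ | ⟨hm, hq, hn, hp⟩
  · -- b₁ = ±b₀, f₁ = ±f₀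
    apply set_pm
    · rcases hm with h | h <;> rw [hn, h] at hb1 <;> simp at hb1 <;> simp [← hb1]
    · rcases hq with h | h <;> rw [hp, h] at hf1 <;> simp at hf1 <;> simp [← hf1]
  · -- b₁ = ±f₀, f₁ = ±b₀
    rw [set_pm_comm b₀ f₀]
    apply set_pm
    · rcases hn with h | h <;> rw [hm, h] at hb1 <;> simp at hb1 <;> simp [← hb1]
    · rcases hp with h | h <;> rw [hq, h] at hf1 <;> simp at hf1 <;> simp [← hf1]
end

section
/- For every natural number n, there do NOT exist symmetric positive definite 2×2 real matrices S₀, S₁, …, S_n with the following properties, where σ_k(v, w) := vᵀ S_k w for v, w ∈ ℝ²: (i) σ₀((1,0), (0,1)) = 0; (ii) σ_n((1, n+1), (1, n+2)) = 0; and (iii) for each i ∈ {1, …, n} and every v ∈ ℝ², σ_{i−1}((1, i), v) = σ_i((1, i), v). -/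
open Matrix

/-- The compatibility conditions of Example 4.3 cannot be satisfied: there are no
symmetric positive definite 2×2 matrices S₀, …, S_n with
σ₀((1,0),(0,1)) = 0, σ_n((1,n+1),(1,n+2)) = 0, and
σ_{i-1}((1,i), ·) = σ_i((1,i), ·) for i = 1, …, n. -/
theorem stmt_2 (n : ℕ) :
    ¬ ∃ S : Fin (n + 1) → Matrix (Fin 2) (Fin 2) ℝ,
      (∀ k, (S k).PosDef) ∧
      (![1, 0] ⬝ᵥ (S 0 *ᵥ ![0, 1]) = 0) ∧
      (![1, (n : ℝ) + 1] ⬝ᵥ (S (Fin.last n) *ᵥ ![1, (n : ℝ) + 2]) = 0) ∧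
      (∀ i : Fin n, ∀ v : Fin 2 → ℝ,
        ![1, (i : ℝ) + 1] ⬝ᵥ (S i.castSucc *ᵥ v) =
          ![1, (i : ℝ) + 1] ⬝ᵥ (S i.succ *ᵥ v)) := by
  rintro ⟨S, hpd, h0, hn, hstep⟩
  have hv01 : (![0, 1] : Fin 2 → ℝ) ≠ 0 := by
    intro h; simpa using congrFun h 1
  have key : ∀ k : ℕ, ∀ hk : k ≤ n,
      0 < S ⟨k, Nat.lt_succ_of_le hk⟩ 0 1 + ((k : ℝ) + 1) * S ⟨k, Nat.lt_succ_of_le hk⟩ 1 1 := by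
    intro k
    induction k with
    | zero =>
      intro hk
      have hc := (hpd ⟨0, Nat.lt_succ_of_le hk⟩).dotProduct_mulVec_pos hv01
      have h0' := h0
      have : (⟨0, Nat.lt_succ_of_le hk⟩ : Fin (n+1)) = 0 := rfl
      rw [this]
      simp [dotProduct, mulVec, Fin.sum_univ_two] at hc h0' ⊢
      linarith
    | succ k ih =>
      intro hk
      have hk' : k ≤ n := Nat.le_of_succ_le hk
      have prev := ih hk'
      have hkn : k < n := hk
      have step := hstep ⟨k, hkn⟩ ![0, 1]
      have hsucc : (⟨k + 1, Nat.lt_succ_of_le hk⟩ : Fin (n+1)) = (⟨k, hkn⟩ : Fin n).succ := rfl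
      have hc := (hpd ((⟨k, hkn⟩ : Fin n).succ)).dotProduct_mulVec_pos hv01
      rw [hsucc]
      simp [dotProduct, mulVec, Fin.sum_univ_two, Fin.castSucc_mk, Fin.succ_mk] at prev step hc ⊢
      nlinarith [step, prev, hc]
  have hq := (hpd (Fin.last n)).dotProduct_mulVec_pos (x := ![1, (n : ℝ) + 1]) (by intro h; simpa using congrFun h 0)
  have hφ := key n le_rfl
  have hlast : (⟨n, Nat.lt_succ_of_le le_rfl⟩ : Fin (n+1)) = Fin.last n := rfl
  rw [hlast] at hφ
  simp [dotProduct, mulVec, Fin.sum_univ_two] at hq hn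
  nlinarith [hq, hφ, hn]
end

section
/- For every real number a > 0 there exists ε > 0 with the following property: for every twice differentiable function φ : ℝ → ℝ satisfying 0 ≤ φ(t) ≤ 1, |φ′(t)| ≤ ε and |φ″(t)| ≤ ε for all t ∈ ℝ, the function f(t) = e^{−t}·(φ(t) + (1 − φ(t))·a) is positive, strictly decreasing (strictly antitone) on ℝ, and strictly convex on ℝ. -/
/-- For every a > 0 there is ε > 0 such that for every twice differentiable
function φ with 0 ≤ φ ≤ 1 and |φ'|, |φ''| ≤ ε, the function
t ↦ e^{-t}(φ(t) + (1 - φ(t))a) is positive, strictly decreasing and strictly convex. -/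
theorem stmt_3 (a : ℝ) (ha : 0 < a) :
    ∃ ε > 0, ∀ φ : ℝ → ℝ,
      (∀ t, DifferentiableAt ℝ φ t) →
      (∀ t, DifferentiableAt ℝ (deriv φ) t) →
      (∀ t, 0 ≤ φ t) → (∀ t, φ t ≤ 1) →
      (∀ t, |deriv φ t| ≤ ε) →
      (∀ t, |deriv (deriv φ) t| ≤ ε) →
      (∀ t, 0 < Real.exp (-t) * (φ t + (1 - φ t) * a)) ∧
        StrictAnti (fun t => Real.exp (-t) * (φ t + (1 - φ t) * a)) ∧
        StrictConvexOn ℝ Set.univ (fun t => Real.exp (-t) * (φ t + (1 - φ t) * a)) := by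
  set m := min 1 a with hm
  have hm0 : 0 < m := lt_min one_pos ha
  refine ⟨m / (3 * (|1 - a| + 1)), by positivity, ?_⟩
  set ε := m / (3 * (|1 - a| + 1)) with hε
  have hεpos : 0 < ε := by positivity
  have hden : (3 : ℝ) * (|1 - a| + 1) ≠ 0 := by positivity
  have key : 3 * ε * (|1 - a| + 1) = m := by
    rw [hε]; field_simp
  intro φ hφ1 hφ2 h0 h1 hd1 hd2
  have hg : ∀ t, m ≤ φ t + (1 - φ t) * a := by
    intro t
    rcases le_total a 1 with h | h
    · have hma : m ≤ a := min_le_right _ _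
      nlinarith [h0 t, h1 t]
    · have hma : m ≤ 1 := min_le_left _ _
      nlinarith [h0 t, h1 t]
  -- first derivative
  have hfderiv : ∀ t, HasDerivAt (fun t => Real.exp (-t) * (φ t + (1 - φ t) * a))
      (Real.exp (-t) * ((1 - a) * deriv φ t - (φ t + (1 - φ t) * a))) t := by
    intro t
    have he : HasDerivAt (fun t : ℝ => Real.exp (-t)) (-Real.exp (-t)) t := by
      simpa [Function.comp_def] using (Real.hasDerivAt_exp (-t)).comp t (hasDerivAt_neg t)
    have hgd : HasDerivAt (fun t => φ t + (1 - φ t) * a) ((1 - a) * deriv φ t) t := by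
      have h := ((hφ1 t).hasDerivAt).add
        (((hasDerivAt_const t (1:ℝ)).sub (hφ1 t).hasDerivAt).mul_const a)
      exact h.congr_deriv (by ring)
    have h := he.mul hgd
    exact h.congr_deriv (by ring)
  have hderiv_eq : deriv (fun t => Real.exp (-t) * (φ t + (1 - φ t) * a))
      = fun t => Real.exp (-t) * ((1 - a) * deriv φ t - (φ t + (1 - φ t) * a)) :=
    funext fun t => (hfderiv t).deriv
  -- bounds
  have habs : ∀ t, (1 - a) * deriv φ t ≤ |1 - a| * ε := by
    intro t
    calc (1 - a) * deriv φ t ≤ |(1 - a) * deriv φ t| := le_abs_self _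
      _ = |1 - a| * |deriv φ t| := abs_mul _ _
      _ ≤ |1 - a| * ε := by
          exact mul_le_mul_of_nonneg_left (hd1 t) (abs_nonneg _)
  have habs2 : ∀ t, (1 - a) * deriv (deriv φ) t ≤ |1 - a| * ε ∧
      -(|1 - a| * ε) ≤ (1 - a) * deriv (deriv φ) t := by
    intro t
    constructor
    · calc (1 - a) * deriv (deriv φ) t ≤ |(1 - a) * deriv (deriv φ) t| := le_abs_self _
        _ = |1 - a| * |deriv (deriv φ) t| := abs_mul _ _
        _ ≤ |1 - a| * ε := mul_le_mul_of_nonneg_left (hd2 t) (abs_nonneg _)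
    · have : |(1 - a) * deriv (deriv φ) t| ≤ |1 - a| * ε := by
        rw [abs_mul]; exact mul_le_mul_of_nonneg_left (hd2 t) (abs_nonneg _)
      linarith [neg_abs_le ((1 - a) * deriv (deriv φ) t)]
  have habs1' : ∀ t, -(|1 - a| * ε) ≤ (1 - a) * deriv φ t := by
    intro t
    have : |(1 - a) * deriv φ t| ≤ |1 - a| * ε := by
      rw [abs_mul]; exact mul_le_mul_of_nonneg_left (hd1 t) (abs_nonneg _)
    linarith [neg_abs_le ((1 - a) * deriv φ t)]
  have hεabs : |1 - a| * ε < m := by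
    nlinarith [abs_nonneg (1 - a)]
  refine ⟨fun t => ?_, ?_, ?_⟩
  · have := hg t
    have := Real.exp_pos (-t)
    nlinarith
  · apply strictAnti_of_deriv_neg
    intro t
    rw [hderiv_eq]
    show Real.exp (-t) * ((1 - a) * deriv φ t - (φ t + (1 - φ t) * a)) < 0
    have h1' := habs t
    have h2' := hg t
    have he := Real.exp_pos (-t)
    nlinarith
  · apply strictConvexOn_of_deriv2_pos convex_univ
    · apply Continuous.continuousOn
      have hc : Continuous φ := continuous_iff_continuousAt.mpr fun t => (hφ1 t).continuousAt
      continuity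
    · intro t _
      have hsnd : HasDerivAt (deriv (fun t => Real.exp (-t) * (φ t + (1 - φ t) * a)))
          (Real.exp (-t) * ((1 - a) * deriv (deriv φ) t - 2 * ((1 - a) * deriv φ t)
            + (φ t + (1 - φ t) * a))) t := by
        rw [hderiv_eq]
        have he : HasDerivAt (fun t : ℝ => Real.exp (-t)) (-Real.exp (-t)) t := by
          simpa [Function.comp_def] using (Real.hasDerivAt_exp (-t)).comp t (hasDerivAt_neg t)
        have hgd : HasDerivAt (fun t => (1 - a) * deriv φ t - (φ t + (1 - φ t) * a))
            ((1 - a) * deriv (deriv φ) t - (1 - a) * deriv φ t) t := by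
          have h1'' : HasDerivAt (fun t => (1 - a) * deriv φ t)
              ((1 - a) * deriv (deriv φ) t) t := (hφ2 t).hasDerivAt.const_mul _
          have h2'' : HasDerivAt (fun t => φ t + (1 - φ t) * a) ((1 - a) * deriv φ t) t := by
            have h := ((hφ1 t).hasDerivAt).add
              (((hasDerivAt_const t (1:ℝ)).sub (hφ1 t).hasDerivAt).mul_const a)
            exact h.congr_deriv (by ring)
          exact h1''.sub h2''
        have h := he.mul hgd
        exact h.congr_deriv (by ring)
      have : (deriv^[2] (fun t => Real.exp (-t) * (φ t + (1 - φ t) * a))) t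
          = Real.exp (-t) * ((1 - a) * deriv (deriv φ) t - 2 * ((1 - a) * deriv φ t)
            + (φ t + (1 - φ t) * a)) := by
        simp only [Function.iterate_succ, Function.iterate_zero, Function.comp_apply, id]
        exact hsnd.deriv
      rw [this]
      have h1' := habs t
      have h2' := (habs2 t).2
      have h3' := hg t
      have he := Real.exp_pos (-t)
      nlinarith
end
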